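/- Shift coupling for discrete Laplacians: for any ε > 0, integers m, m', k, and nonnegative integer c with |k + m − m'| ≤ c, there exists a (c·ε, 0)-approximate coupling between Lap_ε^m and Lap_ε^{m'} for the relation {(z, z') : z' = z + k}. -/

import Mathlib

open scoped Classical

noncomputable def lapW (ε : ℝ) : ℝ := ∑' z : ℤ, Real.exp (-ε * |(z : ℝ)|)

noncomputable def lapPMF (ε : ℝ) (m v : ℤ) : ℝ :=
  Real.exp (-ε * |(v : ℝ) - (m : ℝ)|) / lapW ε

def ACoupling {A B : Type*} (μ₁ : A → ℝ) (μ₂ : B → ℝ) (ε δ : ℝ) (Φ : A → B → Prop) : Prop :=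
  ∀ (f : A → ℝ) (g : B → ℝ),
    (∀ a, 0 ≤ f a ∧ f a ≤ 1) → (∀ b, 0 ≤ g b ∧ g b ≤ 1) →
    (∀ a b, Φ a b → f a ≤ g b) →
    ∑' a, μ₁ a * f a ≤ Real.exp ε * ∑' b, μ₂ b * g b + δ

lemma summable_exp_neg_abs_int (ε : ℝ) (hε : 0 < ε) :
    Summable (fun z : ℤ => Real.exp (-ε * |(z : ℝ)|)) := by
  have hnat : Summable (fun n : ℕ => Real.exp (-ε * n)) := by
    have : ∀ n : ℕ, Real.exp (-ε * n) = (Real.exp (-ε)) ^ n := by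
      intro n; rw [← Real.exp_nat_mul]; ring_nf
    simp only [this]
    exact summable_geometric_of_lt_one (Real.exp_nonneg _)
      (Real.exp_lt_one_iff.mpr (by linarith))
  apply Summable.of_nat_of_neg
  · convert hnat using 2 with n
    · rfl
    simp [abs_of_nonneg]
  · convert hnat using 2 with n
    · rfl
    push_cast
    rw [abs_neg, abs_of_nonneg (by positivity)]

lemma summable_exp_shift (ε : ℝ) (hε : 0 < ε) (m : ℤ) :
    Summable (fun z : ℤ => Real.exp (-ε * |(z : ℝ) - (m : ℝ)|)) := by
  have := (Equiv.summable_iff (Equiv.subRight m)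
    (f := fun z : ℤ => Real.exp (-ε * |(z : ℝ)|))).mpr (summable_exp_neg_abs_int ε hε)
  convert this using 2 with z
  simp only [Function.comp_apply, Equiv.subRight_apply]
  congr 2
  push_cast
  ring

theorem laplace_shift_coupling (ε : ℝ) (hε : 0 < ε) (m m' k : ℤ) (c : ℕ)
    (hk : |k + m - m'| ≤ (c : ℤ)) :
    ACoupling (lapPMF ε m) (lapPMF ε m') ((c : ℝ) * ε) 0
      (fun z z' => z' = z + k) := by
  intro f g hf hg hfg
  have hW : 0 < lapW ε :=
    Summable.tsum_pos (summable_exp_neg_abs_int ε hε) (fun z => Real.exp_nonneg _) 0 (Real.exp_pos _)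
  have hμ₂ : Summable (fun z : ℤ => lapPMF ε m' z) := by
    unfold lapPMF
    exact (summable_exp_shift ε hε m').div_const _
  have hμ₁ : Summable (fun z : ℤ => lapPMF ε m z) := by
    unfold lapPMF
    exact (summable_exp_shift ε hε m).div_const _
  have hpmf_nonneg : ∀ (mm z : ℤ), 0 ≤ lapPMF ε mm z := fun mm z => by
    unfold lapPMF; positivity
  have hsum_f : Summable (fun z : ℤ => lapPMF ε m z * f z) := by
    apply Summable.of_nonneg_of_le (fun z => mul_nonneg (hpmf_nonneg m z) (hf z).1)
      (fun z => ?_) hμ₁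
    calc lapPMF ε m z * f z ≤ lapPMF ε m z * 1 :=
        mul_le_mul_of_nonneg_left (hf z).2 (hpmf_nonneg m z)
      _ = lapPMF ε m z := mul_one _
  have hsum_g : Summable (fun z : ℤ => lapPMF ε m' z * g z) := by
    apply Summable.of_nonneg_of_le (fun z => mul_nonneg (hpmf_nonneg m' z) (hg z).1)
      (fun z => ?_) hμ₂
    calc lapPMF ε m' z * g z ≤ lapPMF ε m' z * 1 :=
        mul_le_mul_of_nonneg_left (hg z).2 (hpmf_nonneg m' z)
      _ = lapPMF ε m' z := mul_one _
  have hsum_shift : Summable (fun z : ℤ => lapPMF ε m' (z + k) * g (z + k)) :=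
    (Equiv.summable_iff (Equiv.addRight k)
      (f := fun z : ℤ => lapPMF ε m' z * g z)).mpr hsum_g
  have key : ∀ z : ℤ, lapPMF ε m z * f z
      ≤ Real.exp ((c : ℝ) * ε) * (lapPMF ε m' (z + k) * g (z + k)) := by
    intro z
    have hpt : lapPMF ε m z ≤ Real.exp ((c : ℝ) * ε) * lapPMF ε m' (z + k) := by
      unfold lapPMF
      rw [← mul_div_assoc]
      apply (div_le_div_iff_of_pos_right hW).mpr
      rw [← Real.exp_add]
      apply Real.exp_le_exp.mpr
      have habs : |((z + k : ℤ) : ℝ) - (m' : ℝ)| ≤ |(z : ℝ) - (m : ℝ)| + (c : ℝ) := by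
        have hk' : |((k + m - m' : ℤ) : ℝ)| ≤ (c : ℝ) := by
          rw [← Int.cast_natCast, ← Int.cast_abs]; exact_mod_cast hk
        push_cast at hk' ⊢
        calc |(z : ℝ) + k - m'| = |((z : ℝ) - m) + (k + m - m')| := by ring_nf
          _ ≤ |(z : ℝ) - m| + |(k : ℝ) + m - m'| := abs_add_le _ _
          _ ≤ |(z : ℝ) - m| + c := by linarith
      nlinarith [abs_nonneg ((z : ℝ) - (m : ℝ))]
    calc lapPMF ε m z * f z ≤ (Real.exp ((c : ℝ) * ε) * lapPMF ε m' (z + k)) * g (z + k) :=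
        mul_le_mul hpt (hfg z (z + k) rfl) (hf z).1
          (mul_nonneg (Real.exp_nonneg _) (hpmf_nonneg m' _))
      _ = Real.exp ((c : ℝ) * ε) * (lapPMF ε m' (z + k) * g (z + k)) := by ring
  calc ∑' z : ℤ, lapPMF ε m z * f z
      ≤ ∑' z : ℤ, Real.exp ((c : ℝ) * ε) * (lapPMF ε m' (z + k) * g (z + k)) :=
        Summable.tsum_le_tsum key hsum_f (hsum_shift.mul_left _)
    _ = Real.exp ((c : ℝ) * ε) * ∑' z : ℤ, lapPMF ε m' (z + k) * g (z + k) := tsum_mul_left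
    _ = Real.exp ((c : ℝ) * ε) * ∑' z : ℤ, lapPMF ε m' z * g z := by
        congr 1
        exact (Equiv.addRight k).tsum_eq (fun z : ℤ => lapPMF ε m' z * g z)
    _ ≤ Real.exp ((c : ℝ) * ε) * ∑' z : ℤ, lapPMF ε m' z * g z + 0 := by linarith
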